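/- Let M be a nonzero comultiplication R-module with non-null, non-empty large sum graph Ǵ(M). Then the clique number of Ǵ(M) is at least the number of minimal submodules of M. -/

import Mathlib

/-- `M` is a comultiplication `R`-module: every submodule is of the form `(0 :_M I)`. -/
def IsComultiplication (R M : Type*) [CommRing R] [AddCommGroup M] [Module R M] : Prop :=
  ∀ N : Submodule R M, ∃ I : Ideal R, ∀ m : M, m ∈ N ↔ ∀ r ∈ I, r • m = 0

/-- A submodule is large (essential) if it meets every nonzero submodule nontrivially. -/
def IsLarge {R M : Type*} [CommRing R] [AddCommGroup M] [Module R M]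
    (N : Submodule R M) : Prop :=
  ∀ L : Submodule R M, L ≠ ⊥ → N ⊓ L ≠ ⊥

/-- The vertices of the large sum graph: nonzero non-large submodules. -/
abbrev LargeSumVtx (R M : Type*) [CommRing R] [AddCommGroup M] [Module R M] :=
  {N : Submodule R M // N ≠ ⊥ ∧ ¬ IsLarge N}

/-- The large sum graph: distinct nonzero non-large submodules `N, K` are adjacent
iff `N + K` is not large. -/
def largeSumGraph (R M : Type*) [CommRing R] [AddCommGroup M] [Module R M] :
    SimpleGraph (LargeSumVtx R M) where
  Adj N K := N ≠ K ∧ ¬ IsLarge (N.1 ⊔ K.1)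
  symm := ⟨fun a b ⟨h1, h2⟩ => ⟨h1.symm, by rwa [sup_comm]⟩⟩
  loopless := ⟨fun a h => h.1 rfl⟩

section Aux

variable {R M : Type*} [CommRing R] [AddCommGroup M] [Module R M]

/-- In a comultiplication module the annihilator map is an order anti-embedding. -/
lemma comult_le (hc : IsComultiplication R M) {N K : Submodule R M}
    (h : K.annihilator ≤ N.annihilator) : N ≤ K := by
  obtain ⟨I, hI⟩ := hc K
  have hIK : I ≤ K.annihilator := by
    intro r hr
    rw [Submodule.mem_annihilator]
    intro k hk
    exact (hI k).mp hk r hr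
  intro m hm
  rw [hI]
  intro r hr
  exact Submodule.mem_annihilator.mp (h (hIK hr)) m hm

/-- The annihilator of an atom (minimal submodule) is a prime ideal. -/
lemma atom_ann_prime {C : Submodule R M} (hC : IsAtom C) : C.annihilator.IsPrime := by
  constructor
  · intro htop
    apply hC.1
    ext x
    simp only [Submodule.mem_bot]
    constructor
    · intro hx
      have h1 : (1 : R) ∈ C.annihilator := htop ▸ Submodule.mem_top
      simpa using Submodule.mem_annihilator.mp h1 x hx
    · rintro rfl; exact C.zero_mem
  · intro x y hxy
    by_cases hy : y ∈ C.annihilator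
    · right; exact hy
    left
    rw [Submodule.mem_annihilator] at hy
    push_neg at hy
    obtain ⟨c, hcC, hyc⟩ := hy
    set D : Submodule R M := C.map (LinearMap.lsmul R M y) with hD
    have hDC : D ≤ C := by
      rintro _ ⟨m, hm, rfl⟩
      exact C.smul_mem y hm
    have hDbot : D ≠ ⊥ := by
      intro hbot
      apply hyc
      have : y • c ∈ D := ⟨c, hcC, rfl⟩
      rwa [hbot, Submodule.mem_bot] at this
    have hDeq : D = C := ((hC.le_iff.mp hDC).resolve_left hDbot)
    rw [Submodule.mem_annihilator]
    intro m hm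
    rw [← hDeq] at hm
    obtain ⟨m', hm', rfl⟩ := hm
    show x • y • m' = 0
    rw [← mul_smul]
    exact Submodule.mem_annihilator.mp hxy m' hm'

/-- In a comultiplication module, an atom below the join of two atoms is one of them. -/
lemma atom_le_sup (hc : IsComultiplication R M) {A B C : Submodule R M}
    (hA : IsAtom A) (hB : IsAtom B) (hC : IsAtom C) (hle : C ≤ A ⊔ B) :
    C = A ∨ C = B := by
  have hAB : A.annihilator ⊓ B.annihilator ≤ C.annihilator := by
    intro r hr
    rw [Submodule.mem_annihilator]
    intro m hm
    rcases Submodule.mem_sup.mp (hle hm) with ⟨a, ha, b, hb, rfl⟩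
    rw [smul_add, Submodule.mem_annihilator.mp hr.1 a ha,
      Submodule.mem_annihilator.mp hr.2 b hb, add_zero]
  have hprime := atom_ann_prime hC
  have hmul : A.annihilator * B.annihilator ≤ C.annihilator :=
    le_trans Ideal.mul_le_inf hAB
  rcases (Ideal.IsPrime.mul_le (hp := hprime)).mp hmul with h | h
  · left
    exact (hA.le_iff.mp (comult_le hc h)).resolve_left hC.1
  · right
    exact (hB.le_iff.mp (comult_le hc h)).resolve_left hC.1

lemma atom_inf_bot {A B : Submodule R M} (hA : IsAtom A) (hB : IsAtom B)
    (hne : A ≠ B) : A ⊓ B = ⊥ := by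
  rcases hA.le_iff.mp (inf_le_left (b := B)) with h | h
  · exact h
  · exfalso
    apply hne
    have hAB : A ≤ B := h ▸ inf_le_right
    exact ((hB.le_iff.mp hAB).resolve_left hA.1)

end Aux

/-- For a nonzero comultiplication module with non-null, non-empty large sum graph, the clique
number is at least the number of minimal submodules: there is a clique into which the set of
minimal submodules embeds. -/
theorem stmt15 {R M : Type*} [CommRing R] [AddCommGroup M] [Module R M]
    [Nontrivial M] (hc : IsComultiplication R M)
    [Nonempty (LargeSumVtx R M)]
    (hedge : ∃ u v : LargeSumVtx R M, (largeSumGraph R M).Adj u v) :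
    ∃ s : Set (LargeSumVtx R M), (largeSumGraph R M).IsClique s ∧
      Nonempty ({S : Submodule R M | IsAtom S} ↪ s) := by
  classical
  by_cases hsub : ∀ C C' : Submodule R M, IsAtom C → IsAtom C' → C = C'
  · -- at most one atom: a singleton clique suffices
    obtain u₀ := Classical.arbitrary (LargeSumVtx R M)
    refine ⟨{u₀}, ?_, ⟨⟨fun _ => ⟨u₀, rfl⟩, ?_⟩⟩⟩
    · intro x hx y hy hxy
      exact absurd (hx.trans hy.symm) hxy
    · intro a b _
      exact Subtype.ext (hsub a.1 b.1 a.2 b.2)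
  · push_neg at hsub
    obtain ⟨X, Y, hX, hY, hXY⟩ := hsub
    by_cases hlarge : ∀ A B : Submodule R M, IsAtom A → IsAtom B → A ≠ B →
        ¬ IsLarge (A ⊔ B)
    · -- the atoms themselves form a clique
      have hnl : ∀ A : Submodule R M, IsAtom A → ¬ IsLarge A := by
        intro A hA h
        by_cases hAX : A = X
        · subst hAX
          exact (h Y hY.1) (atom_inf_bot hA hY hXY)
        · exact (h X hX.1) (atom_inf_bot hA hX hAX)
      refine ⟨{v : LargeSumVtx R M | IsAtom v.1}, ?_, ⟨⟨fun A =>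
        ⟨⟨A.1, A.2.1, hnl A.1 A.2⟩, A.2⟩, ?_⟩⟩⟩
      · intro x hx y hy hxy
        exact ⟨hxy, hlarge x.1 y.1 hx hy (fun h => hxy (Subtype.ext h))⟩
      · intro a b hab
        apply Subtype.ext
        exact congrArg (fun z => z.1.1) hab
    · -- some pair of atoms has large join: then there are exactly two atoms
      push_neg at hlarge
      obtain ⟨A, B, hA, hB, hAB, hL⟩ := hlarge
      obtain ⟨u, v, huv⟩ := hedge
      have hne : u ≠ v := huv.1
      have hduo : ∀ C : Submodule R M, IsAtom C → C = A ∨ C = B := by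
        intro C hCatom
        have h1 : (A ⊔ B) ⊓ C ≠ ⊥ := hL C hCatom.1
        have h2 : C ≤ A ⊔ B := by
          rcases hCatom.le_iff.mp (inf_le_left (a := C) (b := A ⊔ B)) with h | h
          · exact absurd (by rwa [inf_comm] at h) h1
          · exact h ▸ inf_le_right
        exact atom_le_sup hc hA hB hCatom h2
      refine ⟨{u, v}, ?_, ⟨⟨fun C =>
        if C.1 = A then ⟨u, Or.inl rfl⟩ else ⟨v, Or.inr rfl⟩, ?_⟩⟩⟩
      · intro x hx y hy hxy
        rcases hx with rfl | rfl <;> rcases hy with rfl | rfl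
        · exact absurd rfl hxy
        · exact huv
        · exact huv.symm
        · exact absurd rfl hxy
      · intro a b hab
        by_cases ha : a.1 = A <;> by_cases hb : b.1 = A <;>
          simp only [ha, hb, if_pos, if_neg, if_true, if_false] at hab
        · exact Subtype.ext (ha.trans hb.symm)
        · exact absurd (congrArg Subtype.val hab) hne
        · exact absurd (congrArg Subtype.val hab).symm hne
        · have h1 := (hduo a.1 a.2).resolve_left ha
          have h2 := (hduo b.1 b.2).resolve_left hb
          exact Subtype.ext (h1.trans h2.symm)
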